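/- Let φ : [0,T) → [0,∞) solve the CIR IVP and be bijective with inverse φ̂. Then for every x ≥ 0, φ̂(x) ≤ sup_{0 ≤ u ≤ x} (u − ω(u)) + 2√(xε). -/

import Mathlib

/-- upper bound in time for the inverse of a bijective CIR IVP solution:
`φ̂(x) ≤ sup_{0 ≤ u ≤ x} (u − ω(u)) + 2√(xε)`. -/
theorem cir_ivp_inverse_upper_bound (ε T : ℝ) (hε : 0 < ε) (hT : 0 < T)
    (ω φ φhat : ℝ → ℝ) (hω : ContinuousOn ω (Set.Ici 0)) (hω0 : ω 0 = 0)
    (hφ0 : φ 0 = 0)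
    (hode : ∀ t ∈ Set.Ico (0:ℝ) T,
      HasDerivAt φ (ε⁻¹ * (ω (φ t) + t - φ t) + 1) t)
    (hbij : Set.BijOn φ (Set.Ico 0 T) (Set.Ici 0))
    (hinv : ∀ x ∈ Set.Ici (0:ℝ), φ (φhat x) = x ∧ φhat x ∈ Set.Ico 0 T) :
    ∀ x : ℝ, 0 ≤ x →
      φhat x ≤ sSup {y : ℝ | ∃ u ∈ Set.Icc (0:ℝ) x, y = u - ω u}
        + 2 * Real.sqrt (x * ε) := by
  intro x hx
  have hφt := (hinv x hx).1
  have ht0 := (hinv x hx).2.1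
  have htT := (hinv x hx).2.2
  set t := φhat x with htdef
  set S := sSup {y : ℝ | ∃ u ∈ Set.Icc (0:ℝ) x, y = u - ω u} with hSdef
  -- basic facts about S
  have hsetim : {y : ℝ | ∃ u ∈ Set.Icc (0:ℝ) x, y = u - ω u}
      = (fun u => u - ω u) '' Set.Icc 0 x := by
    ext y; constructor
    · rintro ⟨u, hu, rfl⟩; exact ⟨u, hu, rfl⟩
    · rintro ⟨u, hu, rfl⟩; exact ⟨u, hu, rfl⟩
  have hcontω : ContinuousOn (fun u => u - ω u) (Set.Icc (0:ℝ) x) :=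
    (continuousOn_id.sub (hω.mono fun u hu => hu.1))
  have hbdd : BddAbove {y : ℝ | ∃ u ∈ Set.Icc (0:ℝ) x, y = u - ω u} := by
    rw [hsetim]
    exact (isCompact_Icc.image_of_continuousOn hcontω).bddAbove
  have hle : ∀ u ∈ Set.Icc (0:ℝ) x, u - ω u ≤ S := fun u hu =>
    le_csSup hbdd ⟨u, hu, rfl⟩
  have hS0 : 0 ≤ S := by
    have := hle 0 ⟨le_refl 0, hx⟩
    simpa [hω0] using this
  -- continuity of φ on [0, t]
  have hφcont : ∀ s ∈ Set.Icc (0:ℝ) t, ContinuousAt φ s := fun s hs =>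
    (hode s ⟨hs.1, lt_of_le_of_lt hs.2 htT⟩).continuousAt
  -- φ maps [0, t] into [0, x]
  have hφrange : ∀ s ∈ Set.Icc (0:ℝ) t, φ s ∈ Set.Icc (0:ℝ) x := by
    intro s hs
    have hsIco : s ∈ Set.Ico (0:ℝ) T := ⟨hs.1, lt_of_le_of_lt hs.2 htT⟩
    have h0 : 0 ≤ φ s := hbij.mapsTo hsIco
    refine ⟨h0, ?_⟩
    by_contra hgt
    push_neg at hgt
    -- φ s > x, use IVT on [0, s] to find c with φ c = x
    have hcont0s : ContinuousOn φ (Set.Icc 0 s) := fun u hu =>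
      (hφcont u ⟨hu.1, le_trans hu.2 hs.2⟩).continuousWithinAt
    have hxmem : x ∈ Set.Icc (φ 0) (φ s) := by
      rw [hφ0]; exact ⟨hx, le_of_lt hgt⟩
    obtain ⟨c, hc, hφc⟩ := intermediate_value_Icc hs.1 hcont0s hxmem
    have hcIco : c ∈ Set.Ico (0:ℝ) T := ⟨hc.1, lt_of_le_of_lt (le_trans hc.2 hs.2) htT⟩
    have htIco : t ∈ Set.Ico (0:ℝ) T := ⟨ht0, htT⟩
    have hct : c = t := hbij.injOn hcIco htIco (by rw [hφc, hφt])
    have hst : s = t := le_antisymm hs.2 (hct ▸ hc.2)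
    rw [hst, hφt] at hgt
    exact lt_irrefl x hgt
  -- main case split
  rcases le_or_gt t S with h | hSt
  · have : 0 ≤ 2 * Real.sqrt (x * ε) := by positivity
    linarith
  -- S < t : compare with parabola
  have hφS0 : 0 ≤ φ S := (hφrange S ⟨hS0, le_of_lt hSt⟩).1
  set ψ : ℝ → ℝ := fun s => φ s - (s - S) ^ 2 / (2 * ε) with hψdef
  have hmono : MonotoneOn ψ (Set.Icc S t) := by
    apply monotoneOn_of_hasDerivWithinAt_nonneg (f' := fun s =>
      ε⁻¹ * (ω (φ s) + s - φ s) + 1 - (s - S) / ε) (convex_Icc S t)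
    · intro s hs
      have : ContinuousAt ψ s := by
        have h1 : ContinuousAt φ s := hφcont s ⟨le_trans hS0 hs.1, hs.2⟩
        fun_prop
      exact this.continuousWithinAt
    · intro s hs
      rw [interior_Icc] at hs
      have hsIco : s ∈ Set.Ico (0:ℝ) T :=
        ⟨le_trans hS0 (le_of_lt hs.1), lt_trans hs.2 htT⟩
      have h1 := hode s hsIco
      have h2 : HasDerivAt (fun s => (s - S) ^ 2 / (2 * ε)) ((s - S) / ε) s := by
        have := (((hasDerivAt_id s).sub_const S).pow 2).div_const (2 * ε)
        refine this.congr_deriv ?_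
        simp only [id]
        field_simp
        ring
      exact (h1.sub h2).hasDerivWithinAt
    · intro s hs
      rw [interior_Icc] at hs
      have hmem : φ s ∈ Set.Icc (0:ℝ) x :=
        hφrange s ⟨le_trans hS0 (le_of_lt hs.1), le_of_lt hs.2⟩
      have hkey : φ s - ω (φ s) ≤ S := hle _ hmem
      have h1 : ε⁻¹ * (ω (φ s) + s - φ s) + 1 - (s - S) / ε
          = ε⁻¹ * (S - (φ s - ω (φ s))) + 1 := by
        field_simp
        ring
      rw [h1]
      have : 0 ≤ ε⁻¹ * (S - (φ s - ω (φ s))) := by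
        apply mul_nonneg (le_of_lt (inv_pos.mpr hε))
        linarith
      linarith
  have hψSt := hmono (Set.left_mem_Icc.mpr (le_of_lt hSt))
    (Set.right_mem_Icc.mpr (le_of_lt hSt)) (le_of_lt hSt)
  -- ψ S = φ S, ψ t = x - (t - S)^2/(2ε)
  have hineq : (t - S) ^ 2 / (2 * ε) ≤ x := by
    have hψS : ψ S = φ S := by simp [hψdef]
    have hψt : ψ t = x - (t - S) ^ 2 / (2 * ε) := by simp [hψdef, hφt]
    rw [hψS, hψt] at hψSt
    linarith
  have hsq : (t - S) ^ 2 ≤ 4 * (x * ε) := by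
    have h2ε : 0 < 2 * ε := by linarith
    have := (div_le_iff₀ h2ε).mp hineq
    nlinarith
  have hfinal : t - S ≤ 2 * Real.sqrt (x * ε) := by
    have h1 : t - S = Real.sqrt ((t - S) ^ 2) :=
      (Real.sqrt_sq (by linarith)).symm
    rw [h1]
    calc Real.sqrt ((t - S) ^ 2) ≤ Real.sqrt (4 * (x * ε)) :=
          Real.sqrt_le_sqrt hsq
      _ = 2 * Real.sqrt (x * ε) := by
          rw [show (4 : ℝ) * (x * ε) = 2 ^ 2 * (x * ε) by ring,
            Real.sqrt_mul (by positivity), Real.sqrt_sq (by norm_num)]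
  linarith
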